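/- arXiv:1304.0371 — 2 statements merged into one kernel-verified Lean document; each statement's English description precedes it below -/
import Mathlib

section
/- Let f : (ZMod 2)^n → ℝ be a Boolean function (f(x) ∈ {−1,1} for all x) with spectral norm ‖f̂‖₁ = A. Let α ∈ (ZMod 2)^n be such that |f̂(α)| is maximal over all Fourier coefficients, and let β ≠ α be such that |f̂(β)| is maximal over all γ ≠ α. Then |f̂(α)| ≥ 1/A and |f̂(β)| ≥ (1 − f̂(α)²)/A. -/
/-- The character `χ_α(x) = (-1)^{⟨α,x⟩}` on the Boolean cube `(ZMod 2)^n`. -/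
noncomputable def chi {n : ℕ} (α x : Fin n → ZMod 2) : ℝ :=
  if (∑ i, α i * x i : ZMod 2) = 0 then 1 else -1

/-- The Fourier coefficient `f̂(α) = 2^{-n} ∑_x f(x) χ_α(x)`. -/
noncomputable def fhat {n : ℕ} (f : (Fin n → ZMod 2) → ℝ) (α : Fin n → ZMod 2) : ℝ :=
  (2 ^ n : ℝ)⁻¹ * ∑ x : Fin n → ZMod 2, f x * chi α x

lemma zmod2_cases (a : ZMod 2) : a = 0 ∨ a = 1 := by
  revert a; decide

lemma chi_mul {n : ℕ} (γ x y : Fin n → ZMod 2) :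
    chi γ x * chi γ y = chi γ (x + y) := by
  unfold chi
  have h : (∑ i, γ i * (x + y) i : ZMod 2) = (∑ i, γ i * x i) + ∑ i, γ i * y i := by
    rw [← Finset.sum_add_distrib]
    exact Finset.sum_congr rfl fun i _ => by simp [mul_add]
  rw [h]
  rcases zmod2_cases (∑ i, γ i * x i) with h1 | h1 <;>
    rcases zmod2_cases (∑ i, γ i * y i) with h2 | h2 <;>
    simp [h1, h2, (by decide : (1 : ZMod 2) + 1 = 0)]

lemma self_add_self {n : ℕ} (x : Fin n → ZMod 2) : x + x = 0 := by
  funext i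
  rcases zmod2_cases (x i) with h | h <;> simp [h, (by decide : (1 : ZMod 2) + 1 = 0)]

lemma chi_sum {n : ℕ} (z : Fin n → ZMod 2) :
    ∑ γ : Fin n → ZMod 2, chi γ z = if z = 0 then (2 ^ n : ℝ) else 0 := by
  by_cases hz : z = 0
  · subst hz
    simp [chi, Finset.card_univ]
  · simp only [hz, if_false]
    obtain ⟨i, hi⟩ : ∃ i, z i ≠ 0 := by
      by_contra h
      push_neg at h
      exact hz (funext fun i => h i)
    have hzi : z i = 1 := by rcases zmod2_cases (z i) with h | h; exact absurd h hi; exact h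
    set e : Fin n → ZMod 2 := Pi.single i 1 with he
    have key : ∀ γ : Fin n → ZMod 2, chi (γ + e) z = - chi γ z := by
      intro γ
      unfold chi
      have h : (∑ j, (γ + e) j * z j : ZMod 2) = (∑ j, γ j * z j) + 1 := by
        have h2 : (∑ j, (γ + e) j * z j : ZMod 2)
            = (∑ j, γ j * z j) + ∑ j, e j * z j := by
          rw [← Finset.sum_add_distrib]
          exact Finset.sum_congr rfl fun j _ => by simp [add_mul]
        rw [h2]
        congr 1
        rw [Finset.sum_eq_single i]
        · simp [he, hzi]
        · intro j _ hj; simp [he, Pi.single_eq_of_ne hj]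
        · simp
      rw [h]
      rcases zmod2_cases (∑ j, γ j * z j) with h1 | h1 <;>
        simp [h1, (by decide : (1 : ZMod 2) + 1 = 0), (by decide : (0 : ZMod 2) + 1 ≠ 0)]
    have hre : ∑ γ : Fin n → ZMod 2, chi (γ + e) z = ∑ γ : Fin n → ZMod 2, chi γ z :=
      Fintype.sum_equiv (Equiv.addRight e) _ _ (fun γ => rfl)
    have hsum : ∑ γ : Fin n → ZMod 2, chi γ z = - ∑ γ : Fin n → ZMod 2, chi γ z := by
      calc ∑ γ : Fin n → ZMod 2, chi γ z
          = ∑ γ : Fin n → ZMod 2, chi (γ + e) z := hre.symm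
        _ = ∑ γ : Fin n → ZMod 2, - chi γ z := Finset.sum_congr rfl fun γ _ => key γ
        _ = - ∑ γ : Fin n → ZMod 2, chi γ z := by rw [Finset.sum_neg_distrib]
    linarith

lemma parseval {n : ℕ} (f : (Fin n → ZMod 2) → ℝ) (hf : ∀ x, f x = 1 ∨ f x = -1) :
    ∑ γ : Fin n → ZMod 2, (fhat f γ) ^ 2 = 1 := by
  have hfx : ∀ x, f x * f x = 1 := fun x => by rcases hf x with h | h <;> rw [h] <;> ring
  have expand : ∀ γ : Fin n → ZMod 2, (fhat f γ) ^ 2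
      = (2 ^ n : ℝ)⁻¹ * (2 ^ n : ℝ)⁻¹ *
        ∑ x : Fin n → ZMod 2, ∑ y : Fin n → ZMod 2, f x * f y * chi γ (x + y) := by
    intro γ
    unfold fhat
    rw [sq, mul_mul_mul_comm, Finset.sum_mul_sum]
    congr 1
    refine Finset.sum_congr rfl fun x _ => Finset.sum_congr rfl fun y _ => ?_
    rw [← chi_mul]; ring
  calc ∑ γ : Fin n → ZMod 2, (fhat f γ) ^ 2
      = (2 ^ n : ℝ)⁻¹ * (2 ^ n : ℝ)⁻¹ *
        ∑ γ : Fin n → ZMod 2, ∑ x : Fin n → ZMod 2, ∑ y : Fin n → ZMod 2,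
          f x * f y * chi γ (x + y) := by
        rw [Finset.mul_sum]; exact Finset.sum_congr rfl fun γ _ => expand γ
    _ = (2 ^ n : ℝ)⁻¹ * (2 ^ n : ℝ)⁻¹ *
        ∑ x : Fin n → ZMod 2, ∑ y : Fin n → ZMod 2,
          f x * f y * ∑ γ : Fin n → ZMod 2, chi γ (x + y) := by
        congr 1
        rw [Finset.sum_comm]
        refine Finset.sum_congr rfl fun x _ => ?_
        rw [Finset.sum_comm]
        refine Finset.sum_congr rfl fun y _ => ?_
        rw [Finset.mul_sum]
    _ = 1 := by
        have inner : ∀ x : Fin n → ZMod 2,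
            (∑ y : Fin n → ZMod 2, f x * f y * ∑ γ : Fin n → ZMod 2, chi γ (x + y))
            = (2 ^ n : ℝ) := by
          intro x
          rw [Finset.sum_eq_single x]
          · rw [chi_sum, if_pos (self_add_self x)]
            rw [hfx x]; ring
          · intro y _ hy
            rw [chi_sum]
            have hxy : x + y ≠ 0 := by
              intro h
              apply hy
              have : y = x + (x + y) := by rw [← add_assoc, self_add_self, zero_add]
              rw [this, h, add_zero]
            rw [if_neg hxy, mul_zero]
          · simp
        rw [Finset.sum_congr rfl fun x _ => inner x]
        have h2n : (2 : ℝ) ^ n ≠ 0 := by positivity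
        simp [Finset.card_univ]
        field_simp

/-- **Lemma 3.3**: a Boolean function with spectral norm `A` has largest Fourier
coefficient at least `1/A` in absolute value, and second largest at least
`(1 - f̂(α)²)/A`. -/
theorem largest_coeff {n : ℕ}
    (f : (Fin n → ZMod 2) → ℝ) (hf : ∀ x, f x = 1 ∨ f x = -1)
    (A : ℝ) (hA : ∑ γ : Fin n → ZMod 2, |fhat f γ| = A)
    (α β : Fin n → ZMod 2)
    (hα : ∀ γ, |fhat f γ| ≤ |fhat f α|)
    (hβα : β ≠ α)
    (hβ : ∀ γ, γ ≠ α → |fhat f γ| ≤ |fhat f β|) :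
    1 / A ≤ |fhat f α| ∧ (1 - (fhat f α) ^ 2) / A ≤ |fhat f β| := by
  have hpar := parseval f hf
  have hA0 : 0 ≤ A := hA ▸ Finset.sum_nonneg fun γ _ => abs_nonneg _
  have h1 : 1 ≤ |fhat f α| * A := by
    calc (1 : ℝ) = ∑ γ : Fin n → ZMod 2, (fhat f γ) ^ 2 := hpar.symm
      _ = ∑ γ : Fin n → ZMod 2, |fhat f γ| * |fhat f γ| := by
          refine Finset.sum_congr rfl fun γ _ => ?_
          rw [← abs_mul, sq, abs_mul_self]
      _ ≤ ∑ γ : Fin n → ZMod 2, |fhat f α| * |fhat f γ| :=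
          Finset.sum_le_sum fun γ _ => mul_le_mul_of_nonneg_right (hα γ) (abs_nonneg _)
      _ = |fhat f α| * A := by rw [← Finset.mul_sum, hA]
  have hApos : 0 < A := by
    rcases hA0.lt_or_eq with h | h
    · exact h
    · exfalso; rw [← h, mul_zero] at h1; linarith
  constructor
  · rw [div_le_iff₀ hApos]; linarith [h1]
  · rw [div_le_iff₀ hApos]
    have hsplit : (1 : ℝ) - (fhat f α) ^ 2
        = ∑ γ ∈ Finset.univ.erase α, (fhat f γ) ^ 2 := by
      rw [← hpar, ← Finset.add_sum_erase Finset.univ _ (Finset.mem_univ α)]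
      ring
    have hAsplit : ∑ γ ∈ Finset.univ.erase α, |fhat f γ| ≤ A := by
      rw [← hA]
      exact Finset.sum_le_sum_of_subset_of_nonneg (Finset.erase_subset _ _)
        (fun γ _ _ => abs_nonneg _)
    calc (1 : ℝ) - (fhat f α) ^ 2
        = ∑ γ ∈ Finset.univ.erase α, (fhat f γ) ^ 2 := hsplit
      _ = ∑ γ ∈ Finset.univ.erase α, |fhat f γ| * |fhat f γ| := by
          refine Finset.sum_congr rfl fun γ _ => ?_
          rw [← abs_mul, sq, abs_mul_self]
      _ ≤ ∑ γ ∈ Finset.univ.erase α, |fhat f β| * |fhat f γ| := by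
          refine Finset.sum_le_sum fun γ hγ => ?_
          exact mul_le_mul_of_nonneg_right (hβ γ (Finset.ne_of_mem_erase hγ)) (abs_nonneg _)
      _ = |fhat f β| * ∑ γ ∈ Finset.univ.erase α, |fhat f γ| := by rw [← Finset.mul_sum]
      _ ≤ |fhat f β| * A := mul_le_mul_of_nonneg_left hAsplit (abs_nonneg _)
end

section
/- Let f : (ZMod 2)^n → ℝ be a Boolean function (f(x) ∈ {−1,1} for all x) with spectral norm ‖f̂‖₁ = A > 1. Then there exist γ ∈ (ZMod 2)^n with γ ≠ 0 and b ∈ {−1,1} such that (1/2)·∑_{β ∈ (ZMod 2)^n} |f̂(β) + b·f̂(β+γ)| ≤ A − 1/A; that is, the spectral norm of the restriction of f to the affine subspace {x : χ_γ(x) = b} is at most A − 1/A. -/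
lemma cube_add_add_self {n : ℕ} (x y : Fin n → ZMod 2) : x + (x + y) = y := by
  funext i
  have : ∀ u v : ZMod 2, u + (u + v) = v := by decide
  simpa using this (x i) (y i)

lemma cube_add_self_right {n : ℕ} (x y : Fin n → ZMod 2) : (x + y) + y = x := by
  funext i
  have : ∀ u v : ZMod 2, (u + v) + v = u := by decide
  simpa using this (x i) (y i)

lemma chi_comm {n : ℕ} (α x : Fin n → ZMod 2) : chi α x = chi x α := by
  unfold chi
  congr 1
  · rw [eq_iff_iff]
    constructor <;> intro h <;> [skip; skip] <;>
      · rw [← h]; exact (Finset.sum_congr rfl fun i _ => mul_comm _ _)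

lemma chi_mul_right {n : ℕ} (α x y : Fin n → ZMod 2) :
    chi α x * chi α y = chi α (x + y) := by
  unfold chi
  have h : (∑ i, α i * (x + y) i) = (∑ i, α i * x i) + (∑ i, α i * y i) := by
    rw [← Finset.sum_add_distrib]
    exact Finset.sum_congr rfl fun i _ => by simp [mul_add]
  rw [h]
  have hz : ∀ z : ZMod 2, z = 0 ∨ z = 1 := by decide
  rcases hz (∑ i, α i * x i) with h1 | h1 <;> rcases hz (∑ i, α i * y i) with h2 | h2 <;>
    rw [h1, h2] <;>
    simp [show (1 : ZMod 2) ≠ 0 by decide, show (1 + 1 : ZMod 2) = 0 by decide]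

lemma chi_add_left {n : ℕ} (β γ y : Fin n → ZMod 2) :
    chi (β + γ) y = chi β y * chi γ y := by
  rw [chi_comm, chi_comm β y, chi_comm γ y, chi_mul_right]

lemma chi_zero_left {n : ℕ} (x : Fin n → ZMod 2) : chi (0 : Fin n → ZMod 2) x = 1 := by
  unfold chi
  simp

lemma sum_chi {n : ℕ} {γ : Fin n → ZMod 2} (hγ : γ ≠ 0) :
    ∑ x : Fin n → ZMod 2, chi γ x = 0 := by
  obtain ⟨i, hi⟩ : ∃ i, γ i ≠ 0 := by
    by_contra h
    push_neg at h
    exact hγ (funext h)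
  set e : Fin n → ZMod 2 := Pi.single i 1 with he
  have hchie : chi γ e = -1 := by
    unfold chi
    have hs : (∑ j, γ j * e j) = γ i := by
      rw [Finset.sum_eq_single i]
      · simp [he]
      · intro b _ hb; simp [he, Pi.single_eq_of_ne hb]
      · intro h; exact absurd (Finset.mem_univ i) h
    rw [hs]
    simp [hi]
  have key : ∀ x, chi γ (x + e) = - chi γ x := by
    intro x
    rw [← chi_mul_right, hchie]
    ring
  have h2 : ∑ x : Fin n → ZMod 2, chi γ (x + e) = ∑ x : Fin n → ZMod 2, chi γ x :=
    Fintype.sum_equiv (Equiv.addRight e) _ _ (fun x => rfl)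
  have h3 : ∑ x : Fin n → ZMod 2, chi γ (x + e) = - ∑ x : Fin n → ZMod 2, chi γ x := by
    rw [← Finset.sum_neg_distrib]
    exact Finset.sum_congr rfl fun x _ => key x
  have := h2.symm.trans h3
  linarith

lemma sum_chi_mul {n : ℕ} (x y : Fin n → ZMod 2) :
    ∑ β : Fin n → ZMod 2, chi β x * chi β y = if x = y then (2 ^ n : ℝ) else 0 := by
  have hrw : ∀ β : Fin n → ZMod 2, chi β x * chi β y = chi (x + y) β := by
    intro β
    rw [chi_mul_right, chi_comm]
  rw [Finset.sum_congr rfl fun β _ => hrw β]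
  by_cases h : x = y
  · subst h
    have hxy : x + x = 0 := by
      funext i
      have : ∀ u : ZMod 2, u + u = 0 := by decide
      simpa using this (x i)
    rw [hxy, if_pos rfl]
    simp only [chi_zero_left, Finset.sum_const, Finset.card_univ]
    simp [Fintype.card_fun]
  · rw [if_neg h]
    apply sum_chi
    intro hc
    apply h
    have := cube_add_add_self x y
    rw [hc, add_zero] at this
    exact this

lemma sum_fhat_mul {n : ℕ} (f : (Fin n → ZMod 2) → ℝ) (hf : ∀ x, f x = 1 ∨ f x = -1)
    (γ : Fin n → ZMod 2) :
    ∑ β : Fin n → ZMod 2, fhat f β * fhat f (β + γ) = if γ = 0 then 1 else 0 := by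
  classical
  have h2n : (2 ^ n : ℝ) ≠ 0 := by positivity
  have hfsq : ∀ x, f x * f x = 1 := fun x => by rcases hf x with h | h <;> rw [h] <;> norm_num
  set c : ℝ := (2 ^ n : ℝ)⁻¹ with hc
  have step1 : ∀ β : Fin n → ZMod 2, fhat f β * fhat f (β + γ)
      = c * c * ∑ x : Fin n → ZMod 2, ∑ y : Fin n → ZMod 2,
          f x * f y * chi γ y * (chi β x * chi β y) := by
    intro β
    unfold fhat
    rw [show (c * ∑ x : Fin n → ZMod 2, f x * chi β x) *
          (c * ∑ y : Fin n → ZMod 2, f y * chi (β + γ) y)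
        = c * c * ((∑ x : Fin n → ZMod 2, f x * chi β x) *
          (∑ y : Fin n → ZMod 2, f y * chi (β + γ) y)) from by ring]
    rw [Finset.sum_mul_sum]
    congr 1
    refine Finset.sum_congr rfl fun x _ => Finset.sum_congr rfl fun y _ => ?_
    rw [chi_add_left]
    ring
  rw [Finset.sum_congr rfl fun β _ => step1 β, ← Finset.mul_sum]
  have swap : (∑ β : Fin n → ZMod 2, ∑ x : Fin n → ZMod 2, ∑ y : Fin n → ZMod 2,
        f x * f y * chi γ y * (chi β x * chi β y))
      = ∑ x : Fin n → ZMod 2, ∑ y : Fin n → ZMod 2,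
          f x * f y * chi γ y * ∑ β : Fin n → ZMod 2, (chi β x * chi β y) := by
    rw [Finset.sum_comm]
    refine Finset.sum_congr rfl fun x _ => ?_
    rw [Finset.sum_comm]
    refine Finset.sum_congr rfl fun y _ => ?_
    rw [← Finset.mul_sum]
  rw [swap]
  have collapse : (∑ x : Fin n → ZMod 2, ∑ y : Fin n → ZMod 2,
        f x * f y * chi γ y * ∑ β : Fin n → ZMod 2, (chi β x * chi β y))
      = ∑ x : Fin n → ZMod 2, (2 ^ n : ℝ) * chi γ x := by
    refine Finset.sum_congr rfl fun x _ => ?_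
    rw [Finset.sum_congr rfl fun y _ => by rw [sum_chi_mul x y]]
    rw [Finset.sum_congr rfl fun y (_ : y ∈ Finset.univ) =>
      (mul_ite (x = y) (f x * f y * chi γ y) (2 ^ n : ℝ) 0)]
    simp only [mul_zero]
    rw [Finset.sum_ite_eq]
    simp only [Finset.mem_univ, if_true]
    rw [hfsq x]
    ring
  rw [collapse, ← Finset.mul_sum]
  by_cases hγ0 : γ = 0
  · subst hγ0
    simp only [if_pos rfl]
    rw [Finset.sum_congr rfl fun x _ => chi_zero_left x]
    simp only [Finset.sum_const, Finset.card_univ, nsmul_eq_mul, mul_one]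
    rw [Fintype.card_fun]
    simp only [ZMod.card, Fintype.card_fin]
    push_cast
    rw [hc]
    field_simp
  · rw [if_neg hγ0, sum_chi hγ0]
    ring

lemma key_pointwise (u v : ℝ) :
    |u + v| + |u - v| + 2 * min |u| |v| ≤ 2 * (|u| + |v|) := by
  rcases abs_cases u with ⟨h1, h1'⟩ | ⟨h1, h1'⟩ <;>
  rcases abs_cases v with ⟨h2, h2'⟩ | ⟨h2, h2'⟩ <;>
  rcases abs_cases (u + v) with ⟨h3, h3'⟩ | ⟨h3, h3'⟩ <;>
  rcases abs_cases (u - v) with ⟨h4, h4'⟩ | ⟨h4, h4'⟩ <;>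
  rcases min_cases |u| |v| with ⟨h5, h5'⟩ | ⟨h5, h5'⟩ <;>
  linarith

/-- **Corollary 3.4**: if `f` is Boolean with spectral norm `A > 1`, then some
restriction to an affine hyperplane `{x : χ_γ(x) = b}` (with `γ ≠ 0`,
`b ∈ {−1,1}`) has spectral norm at most `A − 1/A`. Here
`(1/2) ∑_β |f̂(β) + b f̂(β+γ)|` is the spectral norm of that restriction. -/
theorem exists_norm_reducing_restriction {n : ℕ}
    (f : (Fin n → ZMod 2) → ℝ) (hf : ∀ x, f x = 1 ∨ f x = -1)
    (A : ℝ) (hA : ∑ α : Fin n → ZMod 2, |fhat f α| = A) (hA1 : 1 < A) :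
    ∃ γ : Fin n → ZMod 2, γ ≠ 0 ∧ ∃ b : ℝ, (b = 1 ∨ b = -1) ∧
      (1 / 2) * (∑ β : Fin n → ZMod 2, |fhat f β + b * fhat f (β + γ)|) ≤ A - 1 / A := by
  classical
  set a : (Fin n → ZMod 2) → ℝ := fhat f with ha
  have hA0 : (0 : ℝ) < A := lt_trans one_pos hA1
  have hpars : ∑ β : Fin n → ZMod 2, a β * a β = 1 := by
    simpa using sum_fhat_mul f hf 0
  have hconv : ∀ γ : Fin n → ZMod 2, γ ≠ 0 → ∑ β : Fin n → ZMod 2, a β * a (β + γ) = 0 := by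
    intro γ hγ
    simpa [hγ] using sum_fhat_mul f hf γ
  obtain ⟨α₁, -, hα₁⟩ := Finset.exists_max_image Finset.univ (fun β => |a β|) Finset.univ_nonempty
  set M : ℝ := |a α₁| with hMdef
  have hM : ∀ β, |a β| ≤ M := fun β => hα₁ β (Finset.mem_univ β)
  have hMA : 1 ≤ M * A := by
    have h1 : ∑ β : Fin n → ZMod 2, a β * a β ≤ ∑ β : Fin n → ZMod 2, M * |a β| := by
      refine Finset.sum_le_sum fun β _ => ?_
      rw [← abs_mul_abs_self (a β)]
      exact mul_le_mul_of_nonneg_right (hM β) (abs_nonneg _)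
    rw [hpars, ← Finset.mul_sum, hA] at h1
    exact h1
  have hexists2 : ∃ β, β ≠ α₁ ∧ a β ≠ 0 := by
    by_contra h
    push_neg at h
    have e1 : a α₁ * a α₁ = 1 := by
      rw [Finset.sum_eq_single α₁ (fun b _ hb => by rw [h b hb]; ring)
        (fun hn => absurd (Finset.mem_univ α₁) hn)] at hpars
      exact hpars
    have e2 : A = M := by
      rw [← hA, Finset.sum_eq_single α₁ (fun b _ hb => by rw [h b hb]; simp)
        (fun hn => absurd (Finset.mem_univ α₁) hn)]
    have e3 : M * M = 1 := by rw [hMdef, abs_mul_abs_self]; exact e1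
    have hM0 : 0 ≤ M := abs_nonneg _
    nlinarith
  obtain ⟨β₀, hβ₀ne, hβ₀⟩ := hexists2
  obtain ⟨α₂, hα₂mem, hα₂⟩ := Finset.exists_max_image (Finset.univ.erase α₁)
    (fun β => |a β|) ⟨β₀, Finset.mem_erase.mpr ⟨hβ₀ne, Finset.mem_univ _⟩⟩
  have hα₂ne : α₂ ≠ α₁ := (Finset.mem_erase.mp hα₂mem).1
  set M₂ : ℝ := |a α₂| with hM₂def
  have hM₂pos : 0 < M₂ :=
    lt_of_lt_of_le (abs_pos.mpr hβ₀) (hα₂ β₀ (Finset.mem_erase.mpr ⟨hβ₀ne, Finset.mem_univ _⟩))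
  have hM₂le : ∀ β, β ≠ α₁ → |a β| ≤ M₂ := fun β hβ =>
    hα₂ β (Finset.mem_erase.mpr ⟨hβ, Finset.mem_univ _⟩)
  set γ : Fin n → ZMod 2 := α₁ + α₂ with hγdef
  have hadd1 : α₁ + γ = α₂ := cube_add_add_self α₁ α₂
  have hadd2 : α₂ + γ = α₁ := by
    rw [hγdef, add_comm α₁ α₂]
    exact cube_add_add_self α₂ α₁
  have hγ : γ ≠ 0 := by
    intro hc
    apply hα₂ne
    have h' := hadd1
    rw [hc, add_zero] at h'
    exact h'.symm
  -- split the convolution identity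
  set S : Finset (Fin n → ZMod 2) := Finset.univ \ {α₁, α₂} with hSdef
  have hsub : ({α₁, α₂} : Finset (Fin n → ZMod 2)) ⊆ Finset.univ := Finset.subset_univ _
  have hsplit : (∑ β ∈ S, a β * a (β + γ)) + ∑ β ∈ ({α₁, α₂} : Finset _), a β * a (β + γ)
      = ∑ β : Fin n → ZMod 2, a β * a (β + γ) := Finset.sum_sdiff hsub
  have hpair : ∑ β ∈ ({α₁, α₂} : Finset _), a β * a (β + γ) = 2 * (a α₁ * a α₂) := by
    rw [Finset.sum_pair (Ne.symm hα₂ne), hadd1, hadd2]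
    ring
  have hS : ∑ β ∈ S, a β * a (β + γ) = -(2 * (a α₁ * a α₂)) := by
    have h0 := hconv γ hγ
    rw [← hsplit, hpair] at h0
    linarith
  have habs : 2 * (M * M₂) ≤ ∑ β ∈ S, |a β * a (β + γ)| := by
    have h1 : |∑ β ∈ S, a β * a (β + γ)| = 2 * (M * M₂) := by
      rw [hS, abs_neg, abs_mul, abs_mul, abs_two, hMdef, hM₂def]
    calc 2 * (M * M₂) = |∑ β ∈ S, a β * a (β + γ)| := h1.symm
      _ ≤ ∑ β ∈ S, |a β * a (β + γ)| := Finset.abs_sum_le_sum_abs _ _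
  have hmin : ∀ β ∈ S, |a β * a (β + γ)| ≤ M₂ * min |a β| |a (β + γ)| := by
    intro β hβ
    have hmem : β ≠ α₁ ∧ β ≠ α₂ := by
      have := Finset.mem_sdiff.mp hβ
      simpa using this.2
    have hb1 : |a β| ≤ M₂ := hM₂le β hmem.1
    have h2 : β + γ ≠ α₁ := by
      intro hc
      apply hmem.2
      have : (β + γ) + γ = α₁ + γ := by rw [hc]
      rw [cube_add_self_right, hadd1] at this
      exact this
    have hb2 : |a (β + γ)| ≤ M₂ := hM₂le _ h2
    rw [abs_mul]
    rcases le_total |a β| |a (β + γ)| with h | h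
    · rw [min_eq_left h]
      calc |a β| * |a (β + γ)| = |a (β + γ)| * |a β| := mul_comm _ _
        _ ≤ M₂ * |a β| := mul_le_mul_of_nonneg_right hb2 (abs_nonneg _)
    · rw [min_eq_right h]
      exact mul_le_mul_of_nonneg_right hb1 (abs_nonneg _)
  have hminsum : 2 * M ≤ ∑ β ∈ S, min |a β| |a (β + γ)| := by
    have h1 : 2 * (M * M₂) ≤ M₂ * ∑ β ∈ S, min |a β| |a (β + γ)| := by
      rw [Finset.mul_sum]
      exact le_trans habs (Finset.sum_le_sum hmin)
    have h2 : (2 * M) * M₂ ≤ (∑ β ∈ S, min |a β| |a (β + γ)|) * M₂ := by linarith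
    exact le_of_mul_le_mul_right h2 hM₂pos
  have hminsum_univ : 2 * M ≤ ∑ β : Fin n → ZMod 2, min |a β| |a (β + γ)| := by
    refine le_trans hminsum (Finset.sum_le_sum_of_subset_of_nonneg (Finset.subset_univ S)
      fun β _ _ => le_min (abs_nonneg _) (abs_nonneg _))
  have hMinv : 1 / A ≤ M := by
    rw [div_le_iff₀ hA0]
    linarith
  have hshift : ∑ β : Fin n → ZMod 2, |a (β + γ)| = A := by
    rw [← hA]
    exact Fintype.sum_equiv (Equiv.addRight γ) _ _ (fun β => rfl)
  set T1 : ℝ := ∑ β : Fin n → ZMod 2, |a β + a (β + γ)| with hT1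
  set T2 : ℝ := ∑ β : Fin n → ZMod 2, |a β - a (β + γ)| with hT2
  set Tm : ℝ := ∑ β : Fin n → ZMod 2, min |a β| |a (β + γ)| with hTm
  have hsum_ineq : T1 + T2 + 2 * Tm ≤ 2 * (A + A) := by
    have h := Finset.sum_le_sum
      (fun β (_ : β ∈ (Finset.univ : Finset (Fin n → ZMod 2))) =>
        key_pointwise (a β) (a (β + γ)))
    calc T1 + T2 + 2 * Tm
        = ∑ β : Fin n → ZMod 2,
            (|a β + a (β + γ)| + |a β - a (β + γ)| + 2 * min |a β| |a (β + γ)|) := by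
          rw [hT1, hT2, hTm, Finset.sum_add_distrib, Finset.sum_add_distrib, Finset.mul_sum]
      _ ≤ ∑ β : Fin n → ZMod 2, 2 * (|a β| + |a (β + γ)|) := h
      _ = 2 * (A + A) := by
          rw [← Finset.mul_sum, Finset.sum_add_distrib, hA, hshift]
  have hbound : T1 + T2 ≤ 4 * A - 4 / A := by
    have h1 : 2 / A ≤ 2 * M := by
      rw [div_le_iff₀ hA0]
      linarith
    have h2 : 2 * M ≤ Tm := hminsum_univ
    have h3 : 2 / A ≤ Tm := le_trans h1 h2
    have h4 : 4 / A = 2 * (2 / A) := by ring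
    linarith
  refine ⟨γ, hγ, ?_⟩
  by_cases hcase : T1 ≤ 2 * A - 2 / A
  · refine ⟨1, Or.inl rfl, ?_⟩
    have hgoal : (∑ β : Fin n → ZMod 2, |a β + 1 * a (β + γ)|) = T1 := by
      rw [hT1]
      exact Finset.sum_congr rfl fun β _ => by rw [one_mul]
    rw [hgoal]
    have h2A : 2 / A = 2 * (1 / A) := by ring
    linarith
  · refine ⟨-1, Or.inr rfl, ?_⟩
    push_neg at hcase
    have h4A : 4 / A = 2 * (2 / A) := by ring
    have hT2le : T2 ≤ 2 * A - 2 / A := by linarith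
    have hgoal : (∑ β : Fin n → ZMod 2, |a β + (-1) * a (β + γ)|) = T2 := by
      rw [hT2]
      exact Finset.sum_congr rfl fun β _ => by rw [neg_one_mul, ← sub_eq_add_neg]
    rw [hgoal]
    have h2A : 2 / A = 2 * (1 / A) := by ring
    linarith
end
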